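/- Let q = p^h with p an odd prime, e ∣ h with h/e odd, and suppose a (distinct entries) and v ∈ (F_q^*)^n satisfy GRS_m(a,v,∞)^⊥ = GRS_{n+1-m}(a,v,∞) for some 1 ≤ m ≤ ⌊(n+1)/2⌋ (Euclidean duality). Then for any 1 ≤ k ≤ ⌊(p^e + n - 1)/(p^e + 1)⌋ and 0 ≤ l ≤ k - 1, there exists an [n+1, k] MDS code C over F_q with dim Hull_e(C) = l. -/

import Mathlib

/-- The extended generalized Reed–Solomon code `GRS_k(a, v, ∞)` as a set of codewords. -/
def eGRSset {F : Type*} [Field F] {n : ℕ} (a v : Fin n → F) (k : ℕ) :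
    Set (Fin (n + 1) → F) :=
  {c | ∃ f : Polynomial F, f.degree < (k : ℕ) ∧
    c = Fin.snoc (fun i => v i * f.eval (a i)) (f.coeff (k - 1))}

/-- The `e`-Galois dual relative to the inner product `⟨x, y⟩ = ∑ i, x i * (y i)^pe`. -/
def galoisDual {F : Type*} [Field F] {ι : Type*} [Fintype ι] (pe : ℕ)
    (C : Submodule F (ι → F)) : Submodule F (ι → F) where
  carrier := {x | ∀ y ∈ C, ∑ i, x i * (y i) ^ pe = 0}
  add_mem' := by
    intro x y hx hy z hz
    simp only [Pi.add_apply, add_mul, Finset.sum_add_distrib]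
    rw [hx z hz, hy z hz, add_zero]
  zero_mem' := by
    intro y _
    simp
  smul_mem' := by
    intro c x hx y hy
    simp only [Pi.smul_apply, smul_eq_mul, mul_assoc, ← Finset.mul_sum]
    rw [hx y hy, mul_zero]

open Polynomial Finset

lemma gcd_dvd_two_aux {p h e : ℕ} (hp : 2 ≤ p) (hdvd : e ∣ h) (hquot : Odd (h / e)) :
    Nat.gcd (p ^ e + 1) (p ^ h - 1) ∣ 2 := by
  have h1 : p ^ e + 1 ∣ p ^ h + 1 := by
    have hh : p ^ h = (p ^ e) ^ (h / e) := by rw [← pow_mul, Nat.mul_div_cancel' hdvd]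
    rw [hh]
    simpa using Odd.nat_add_dvd_pow_add_pow (p ^ e) 1 hquot
  have h2 : Nat.gcd (p ^ e + 1) (p ^ h - 1) ∣ p ^ h + 1 := (Nat.gcd_dvd_left _ _).trans h1
  have h3 : Nat.gcd (p ^ e + 1) (p ^ h - 1) ∣ p ^ h - 1 := Nat.gcd_dvd_right _ _
  have hple : 1 ≤ p ^ h := Nat.one_le_pow _ _ (by omega)
  have h4 := Nat.dvd_sub h2 h3
  simpa [show p ^ h + 1 - (p ^ h - 1) = 2 by omega] using h4

lemma exists_pow_eq_sq {F : Type*} [Field F] [Fintype F] [DecidableEq F] (M : ℕ)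
    (hgcd : Nat.gcd M (Fintype.card F - 1) ∣ 2) (z : F) (hz : z ≠ 0) :
    ∃ w : F, w ≠ 0 ∧ w ^ M = z ^ 2 := by
  obtain ⟨g, hg⟩ := IsCyclic.exists_generator (α := Fˣ)
  obtain ⟨s, hs⟩ := hg (Units.mk0 z hz)
  have hs' : g ^ s = Units.mk0 z hz := hs
  set N := Fintype.card F - 1 with hN
  have hcardU : Nat.card Fˣ = N := by
    rw [Nat.card_eq_fintype_card, Fintype.card_units]
  have hgN : g ^ (N : ℤ) = 1 := by
    rw [zpow_natCast, ← hcardU, pow_card_eq_one']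
  set A := Nat.gcdA M N with hA
  set B := Nat.gcdB M N with hB
  have hbez : (Nat.gcd M N : ℤ) = M * A + N * B := Nat.gcd_eq_gcd_ab M N
  have hdvd2s : (Nat.gcd M N : ℤ) ∣ 2 * s :=
    dvd_mul_of_dvd_left (Int.natCast_dvd_natCast.mpr hgcd) s
  obtain ⟨c, hc⟩ := hdvd2s
  have harith : A * c * M = 2 * s - N * (B * c) := by
    have h5 : (Nat.gcd M N : ℤ) * c = M * A * c + N * B * c := by rw [hbez]; ring
    rw [hc] at *
    nlinarith [h5]
  have hNz : g ^ ((N : ℤ) * (B * c)) = 1 := by rw [zpow_mul, hgN, one_zpow]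
  have key : (g ^ (A * c)) ^ M = g ^ (2 * s) := by
    rw [← zpow_natCast (g ^ (A * c)) M, ← zpow_mul, harith, zpow_sub, hNz]; simp
  have key2 : g ^ (2 * s) = (Units.mk0 z hz) ^ 2 := by
    rw [mul_comm, zpow_mul, hs']
    norm_cast
  refine ⟨((g ^ (A * c) : Fˣ) : F), Units.ne_zero _, ?_⟩
  have : ((g ^ (A * c) : Fˣ) : F) ^ M = (((g ^ (A * c)) ^ M : Fˣ) : F) := by norm_cast
  rw [this, key, key2]
  norm_cast

lemma card_eval_zero_le {F : Type*} [Field F] [DecidableEq F] {n : ℕ} (a : Fin n → F)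
    (ha : Function.Injective a) (f : Polynomial F) (hf : f ≠ 0) :
    (Finset.univ.filter fun i => f.eval (a i) = 0).card ≤ f.natDegree := by
  have h1 : ((Finset.univ.filter fun i => f.eval (a i) = 0).image a).card
      = (Finset.univ.filter fun i => f.eval (a i) = 0).card :=
    Finset.card_image_of_injOn (ha.injOn)
  have h2 : (Finset.univ.filter fun i => f.eval (a i) = 0).image a ⊆ f.roots.toFinset := by
    intro x hx
    simp only [Finset.mem_image, Finset.mem_filter] at hx
    obtain ⟨i, ⟨-, hi⟩, rfl⟩ := hx
    rw [Multiset.mem_toFinset, mem_roots hf]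
    exact hi
  calc (Finset.univ.filter fun i => f.eval (a i) = 0).card
      = ((Finset.univ.filter fun i => f.eval (a i) = 0).image a).card := h1.symm
    _ ≤ f.roots.toFinset.card := Finset.card_le_card h2
    _ ≤ Multiset.card f.roots := Multiset.toFinset_card_le _
    _ ≤ f.natDegree := Polynomial.card_roots' f

lemma sum_inv_prod_mul_eval {F : Type*} [Field F] {n : ℕ}
    (a : Fin n → F) (ha : Function.Injective a) (H : Polynomial F) (hH : H.degree < (n : ℕ)) :
    ∑ i, (∏ j ∈ Finset.univ.erase i, (a i - a j))⁻¹ * H.eval (a i) = H.coeff (n - 1) := by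
  have hinj : Set.InjOn a ↑(Finset.univ : Finset (Fin n)) := ha.injOn
  have hcard : (Finset.univ : Finset (Fin n)).card = n := by simp
  have hE := Lagrange.eq_interpolate (s := Finset.univ) (v := a) hinj (by rwa [hcard])
  conv_rhs => rw [hE]
  rw [Lagrange.interpolate_apply, Polynomial.finset_sum_coeff]
  refine (Finset.sum_congr rfl fun i _ => ?_).symm
  rw [Polynomial.coeff_C_mul]
  have hdeg : (Lagrange.basis Finset.univ a i).natDegree = n - 1 := by
    rw [Lagrange.natDegree_basis hinj (Finset.mem_univ i), hcard]
  have hcoe : (Lagrange.basis Finset.univ a i).coeff (n - 1)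
      = (Lagrange.basis Finset.univ a i).leadingCoeff := by
    rw [Polynomial.leadingCoeff, hdeg]
  rw [hcoe, Lagrange.basis, Polynomial.leadingCoeff_prod]
  have : ∀ j ∈ Finset.univ.erase i, (Lagrange.basisDivisor (a i) (a j)).leadingCoeff
      = (a i - a j)⁻¹ := by
    intro j hj
    rw [Lagrange.basisDivisor, Polynomial.leadingCoeff_mul, Polynomial.leadingCoeff_C,
      (Polynomial.monic_X_sub_C (a j)).leadingCoeff, mul_one]
  rw [Finset.prod_congr rfl this, ← Finset.prod_inv_distrib, mul_comm]

theorem exists_MDS_with_galois_hull_dim_of_euclidean_dual_extended_GRS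
    (p h e n m k l : ℕ)
    (hp : p.Prime) (hpodd : Odd p) (he : 0 < e) (hdvd : e ∣ h) (hquot : Odd (h / e))
    (F : Type*) [Field F] [Fintype F] [DecidableEq F] [CharP F p]
    (hcard : Fintype.card F = p ^ h)
    (a v : Fin n → F) (ha : Function.Injective a) (hv : ∀ i, v i ≠ 0)
    (hm1 : 1 ≤ m) (hm2 : m ≤ (n + 1) / 2)
    (hdual : {x : Fin (n + 1) → F | ∀ y ∈ eGRSset a v m, ∑ i, x i * y i = 0} =
      eGRSset a v (n + 1 - m))
    (hk1 : 1 ≤ k) (hk2 : k ≤ (p ^ e + n - 1) / (p ^ e + 1)) (hl : l ≤ k - 1) :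
    ∃ C : Submodule F (Fin (n + 1) → F),
      Module.finrank F C = k ∧
      (∀ c ∈ C, c ≠ 0 → n - k + 2 ≤ hammingNorm c) ∧
      Module.finrank F ↥(C ⊓ galoisDual (p ^ e) C) = l := by
  classical
  set pe := p ^ e with hpe
  have hp3 : 3 ≤ p := by
    rcases hpodd with ⟨j, hj⟩
    have := hp.two_le
    omega
  have hpe3 : 3 ≤ pe := le_trans hp3 (Nat.le_self_pow (by omega) p)
  have hk2' : k * (pe + 1) ≤ pe + n - 1 := (Nat.le_div_iff_mul_le (by omega)).mp hk2
  have hQ : (k - 1) * (pe + 1) + 2 ≤ n := by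
    have hKk : k = (k - 1) + 1 := by omega
    rw [hKk, add_mul, one_mul] at hk2'
    omega
  have hn2 : 2 ≤ n := by omega
  have hkn : k + 1 ≤ n := by
    have h1 : (k - 1) + 2 ≤ n := by
      have : (k - 1) * 1 ≤ (k - 1) * (pe + 1) := Nat.mul_le_mul_left _ (by omega)
      omega
    -- need k + 1 ≤ n : from (k-1)*(pe+1) + 2 ≤ n and pe + 1 ≥ 4
    have h2 : (k - 1) * 2 ≤ (k - 1) * (pe + 1) := Nat.mul_le_mul_left _ (by omega)
    omega
  have hdegb : (k - 1) + pe * (k - 1) ≤ n - 2 := by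
    have : (k - 1) * (pe + 1) = (k - 1) + pe * (k - 1) := by ring
    omega
  have hmn : m ≤ n := by
    have := (Nat.le_div_iff_mul_le (by omega : 0 < 2)).mp hm2
    omega
  -- the products over the other points
  set P : Fin n → F := fun i => ∏ j ∈ Finset.univ.erase i, (a i - a j) with hP
  have hPne : ∀ i, P i ≠ 0 := by
    intro i
    refine Finset.prod_ne_zero_iff.mpr fun j hj => ?_
    have : j ≠ i := Finset.ne_of_mem_erase hj
    exact sub_ne_zero_of_ne fun hc => this ((ha hc).symm)
  -- ★ : v i ^ 2 * P i = -1, extracted from hdual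
  have hstar : ∀ i : Fin n, v i ^ 2 * P i = -1 := by
    intro i
    have hcarde : (Finset.univ.erase i).card = n - 1 := by
      rw [Finset.card_erase_of_mem (Finset.mem_univ i)]
      simp
    obtain ⟨S1, hS1sub, hS1card⟩ :=
      Finset.exists_subset_card_eq (s := Finset.univ.erase i) (n := m - 1) (by omega)
    set S2 := (Finset.univ.erase i) \ S1 with hS2
    have hS2card : S2.card = n - m := by
      rw [hS2, Finset.card_sdiff_of_subset hS1sub, hcarde, hS1card]
      omega
    set f := ∏ j ∈ S1, (X - C (a j)) with hf
    set g := ∏ j ∈ S2, (X - C (a j)) with hg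
    have hfm : f.Monic := monic_prod_of_monic _ _ fun j _ => monic_X_sub_C (a j)
    have hgm : g.Monic := monic_prod_of_monic _ _ fun j _ => monic_X_sub_C (a j)
    have hfd : f.natDegree = m - 1 := by
      rw [hf, natDegree_prod_of_monic _ _ fun j _ => monic_X_sub_C (a j)]
      simp [hS1card]
    have hgd : g.natDegree = n - m := by
      rw [hg, natDegree_prod_of_monic _ _ fun j _ => monic_X_sub_C (a j)]
      simp [hS2card]
    have hfdeg : f.degree < (m : ℕ) := by
      rw [degree_eq_natDegree hfm.ne_zero, hfd]
      exact_mod_cast (by omega : m - 1 < m)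
    have hgdeg : g.degree < ((n + 1 - m : ℕ) : ℕ) := by
      rw [degree_eq_natDegree hgm.ne_zero, hgd]
      exact_mod_cast (by omega : n - m < n + 1 - m)
    have hfc : f.coeff (m - 1) = 1 := by
      have := hfm.coeff_natDegree
      rwa [hfd] at this
    have hgc : g.coeff (n + 1 - m - 1) = 1 := by
      have := hgm.coeff_natDegree
      rw [hgd] at this
      rwa [show n + 1 - m - 1 = n - m by omega]
    have hymem : (Fin.snoc (fun i' => v i' * f.eval (a i')) (f.coeff (m - 1)) : Fin (n+1) → F)
        ∈ eGRSset a v m := ⟨f, hfdeg, rfl⟩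
    have hxmem : (Fin.snoc (fun i' => v i' * g.eval (a i')) (g.coeff (n + 1 - m - 1)) :
        Fin (n+1) → F) ∈ {x : Fin (n + 1) → F | ∀ y ∈ eGRSset a v m, ∑ i, x i * y i = 0} := by
      rw [hdual]
      exact ⟨g, hgdeg, rfl⟩
    have H0 := hxmem _ hymem
    rw [Fin.sum_univ_castSucc] at H0
    simp only [Fin.snoc_castSucc, Fin.snoc_last] at H0
    rw [hgc, hfc, mul_one] at H0
    have hsum : ∑ i', (v i' * g.eval (a i')) * (v i' * f.eval (a i')) = v i ^ 2 * P i := by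
      rw [Finset.sum_eq_single_of_mem i (Finset.mem_univ i)]
      · have hunion : S1 ∪ S2 = Finset.univ.erase i := Finset.union_sdiff_of_subset hS1sub
        have heval : f.eval (a i) * g.eval (a i) = P i := by
          rw [hf, hg, eval_prod, eval_prod, ← Finset.prod_union Finset.disjoint_sdiff, hunion, hP]
          simp
        calc (v i * g.eval (a i)) * (v i * f.eval (a i))
            = v i ^ 2 * (f.eval (a i) * g.eval (a i)) := by ring
          _ = v i ^ 2 * P i := by rw [heval]
      · intro j _ hj
        have hjmem : j ∈ Finset.univ.erase i := Finset.mem_erase.mpr ⟨hj, Finset.mem_univ j⟩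
        have : f.eval (a j) * g.eval (a j) = 0 := by
          rw [hf, hg, eval_prod, eval_prod, ← Finset.prod_union Finset.disjoint_sdiff,
            Finset.union_sdiff_of_subset hS1sub]
          refine Finset.prod_eq_zero hjmem ?_
          simp
        calc (v j * g.eval (a j)) * (v j * f.eval (a j))
            = v j ^ 2 * (f.eval (a j) * g.eval (a j)) := by ring
          _ = 0 := by rw [this, mul_zero]
    rw [hsum] at H0
    linear_combination H0
  have hv2 : ∀ i, v i ^ 2 = -(P i)⁻¹ := by
    intro i
    rw [show -(P i)⁻¹ = (-1) / P i by rw [neg_div, one_div], eq_div_iff (hPne i)]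
    exact hstar i
  -- choose the multiplier δ
  set t := k - 1 - l with hts
  have htk : t ≤ k - 1 := by omega
  obtain ⟨γ, hγ0, hγδ⟩ : ∃ γ : F, γ ≠ 0 ∧ (0 < t → γ ^ 2 ≠ 1) := by
    rcases Nat.eq_zero_or_pos t with ht0 | ht0
    · exact ⟨1, one_ne_zero, fun hcon => absurd ht0 (by omega)⟩
    · have hkk2 : 2 ≤ k := by omega
      have hcardF : 4 ≤ Fintype.card F := by
        have h6 : 6 ≤ n := by
          have h4 : 4 ≤ pe + 1 := by omega
          have : 1 * 4 ≤ (k - 1) * (pe + 1) := Nat.mul_le_mul (by omega) h4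
          omega
        have hle := Fintype.card_le_of_injective a ha
        rw [Fintype.card_fin] at hle
        omega
      by_contra hcon
      push_neg at hcon
      have hsq : ∀ γ : F, γ ≠ 0 → γ ^ 2 = 1 := fun γ hγ => (hcon γ hγ).2
      have hsub : (Finset.univ : Finset F) ⊆ {0, 1, -1} := by
        intro x _
        rcases eq_or_ne x 0 with rfl | hx
        · simp
        · have := hsq x hx
          rw [sq] at this
          rcases mul_self_eq_one_iff.mp this with rfl | rfl <;> simp
      have hcard3 := Finset.card_le_card hsub
      have c1 := Finset.card_insert_le (0 : F) ({1, -1} : Finset F)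
      have c2 := Finset.card_insert_le (1 : F) ({-1} : Finset F)
      have c3 : ({-1} : Finset F).card = 1 := Finset.card_singleton _
      rw [Finset.card_univ] at hcard3
      omega
  set δ : F := γ ^ 2 with hδ
  have hδ0 : δ ≠ 0 := pow_ne_zero _ hγ0
  set d : Fin n → F := fun i => if (i : ℕ) < t then δ else 1 with hd
  -- choose the column multipliers
  have hgcd : Nat.gcd (pe + 1) (Fintype.card F - 1) ∣ 2 := by
    rw [hcard]
    have := gcd_dvd_two_aux (p := p) (h := h) (e := e) hp.two_le hdvd hquot
    have heq : p ^ e + 1 = pe + 1 := by rw [hpe]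
    rwa [heq] at this
  have hwex : ∀ i : Fin n, ∃ w : F, w ≠ 0 ∧ w ^ (pe + 1) = d i * v i ^ 2 := by
    intro i
    set γi : F := if (i : ℕ) < t then γ else 1 with hγi
    have hγine : γi ≠ 0 := by rw [hγi]; split <;> simp [hγ0]
    obtain ⟨w, hw0, hwp⟩ := exists_pow_eq_sq (pe + 1) hgcd (γi * v i) (mul_ne_zero hγine (hv i))
    refine ⟨w, hw0, ?_⟩
    rw [hwp, mul_pow]
    by_cases hit : (i : ℕ) < t
    · simp only [hγi, hd, if_pos hit, hδ]
    · simp only [hγi, hd, if_neg hit, one_pow, one_mul]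
  choose w hw0 hwpow using hwex
  -- the linear map giving the codewords
  set Φ : Polynomial F →ₗ[F] (Fin (n + 1) → F) :=
    { toFun := fun f => Fin.snoc (fun i => w i * f.eval (a i)) (f.coeff (k - 1)),
      map_add' := by
        intro f g
        funext x
        refine Fin.lastCases ?_ (fun i => ?_) x
        · simp [Fin.snoc_last]
        · simp [Fin.snoc_castSucc, mul_add]
      map_smul' := by
        intro c f
        funext x
        refine Fin.lastCases ?_ (fun i => ?_) x
        · simp [Fin.snoc_last, Polynomial.coeff_smul, smul_eq_mul]
        · simp only [Polynomial.smul_eq_C_mul, eval_mul, eval_C, RingHom.id_apply,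
            Pi.smul_apply, smul_eq_mul, Fin.snoc_castSucc]
          ring } with hΦ
  have hΦapp : ∀ f : Polynomial F,
      Φ f = Fin.snoc (fun i => w i * f.eval (a i)) (f.coeff (k - 1)) := fun _ => rfl
  set CC : Submodule F (Fin (n + 1) → F) :=
    LinearMap.range (Φ.comp (Polynomial.degreeLT F k).subtype) with hCC
  have hmemC : ∀ x : Fin (n + 1) → F, x ∈ CC ↔ ∃ f : Polynomial F,
      f.degree < (k : ℕ) ∧ Φ f = x := by
    intro x
    constructor
    · rintro ⟨⟨f, hf⟩, rfl⟩
      exact ⟨f, Polynomial.mem_degreeLT.mp hf, rfl⟩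
    · rintro ⟨f, hdf, rfl⟩
      exact ⟨⟨f, Polynomial.mem_degreeLT.mpr hdf⟩, rfl⟩
  have hnd : ∀ f : Polynomial F, f.degree < (k : ℕ) → f.natDegree ≤ k - 1 := by
    intro f hf
    by_cases h0 : f = 0
    · simp [h0]
    · have := (Polynomial.natDegree_lt_iff_degree_lt h0).mpr hf
      omega
  have hΦzero : ∀ f : Polynomial F, f.degree < (k : ℕ) → Φ f = 0 → f = 0 := by
    intro f hdf h0
    have hev : ∀ i : Fin n, f.eval (a i) = 0 := by
      intro i
      have := congrFun h0 (Fin.castSucc i)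
      rw [hΦapp, Fin.snoc_castSucc] at this
      simp only [Pi.zero_apply] at this
      rcases mul_eq_zero.mp this with hc | hc
      · exact absurd hc (hw0 i)
      · exact hc
    refine Polynomial.eq_zero_of_natDegree_lt_card_of_eval_eq_zero f ha hev ?_
    rw [Fintype.card_fin]
    have := hnd f hdf
    omega
  -- the hull-controlling positions
  have htn : t ≤ n := by omega
  set T : Finset (Fin n) := Finset.univ.filter (fun i => (i : ℕ) < t) with hT
  have hmemT : ∀ i : Fin n, i ∈ T ↔ (i : ℕ) < t := by
    intro i
    simp [hT]
  have hTcard : T.card = t := by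
    have hTeq : T = Finset.map (Fin.castLEEmb htn) Finset.univ := by
      ext i
      simp only [hT, Finset.mem_filter, Finset.mem_univ, true_and, Finset.mem_map]
      constructor
      · intro hi
        refine ⟨⟨(i : ℕ), hi⟩, ?_⟩
        ext
        simp [Fin.castLEEmb]
      · rintro ⟨j, rfl⟩
        simpa using j.isLt
    rw [hTeq, Finset.card_map, Finset.card_univ, Fintype.card_fin]
  -- the key pairing computation
  have hpair : ∀ f g : Polynomial F, f.degree < (k : ℕ) → g.degree < (k : ℕ) →
      ∑ i : Fin (n + 1), Φ f i * (Φ g i) ^ pe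
        = f.coeff (k - 1) * (g.coeff (k - 1)) ^ pe
          - (δ - 1) * ∑ i ∈ T, (P i)⁻¹ * (f.eval (a i) * (g.eval (a i)) ^ pe) := by
    intro f g hdf hdg
    have hHdeg : (f * g ^ pe).degree < ((n - 1 : ℕ) : ℕ) := by
      by_cases h0 : f * g ^ pe = 0
      · rw [h0, degree_zero]
        exact_mod_cast WithBot.bot_lt_coe _
      · rw [degree_eq_natDegree h0]
        have h1 : (f * g ^ pe).natDegree ≤ f.natDegree + pe * g.natDegree := by
          refine le_trans natDegree_mul_le ?_
          have := Polynomial.natDegree_pow_le (p := g) (n := pe)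
          omega
        have h2 : f.natDegree ≤ k - 1 := hnd f hdf
        have h3 : g.natDegree ≤ k - 1 := hnd g hdg
        have h4 : pe * g.natDegree ≤ pe * (k - 1) := Nat.mul_le_mul_left _ h3
        exact_mod_cast (by omega : (f * g ^ pe).natDegree < n - 1)
    have hsum0 : ∑ i : Fin n, (P i)⁻¹ * (f * g ^ pe).eval (a i) = 0 := by
      have h5 := sum_inv_prod_mul_eval a ha (f * g ^ pe)
        (lt_trans hHdeg (by exact_mod_cast (by omega : n - 1 < n)))
      have h6 : (f * g ^ pe).coeff (n - 1) = 0 := coeff_eq_zero_of_degree_lt hHdeg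
      rw [h6] at h5
      simpa [hP] using h5
    rw [Fin.sum_univ_castSucc]
    simp only [hΦapp, Fin.snoc_castSucc, Fin.snoc_last]
    have hterm : ∀ i : Fin n, (w i * f.eval (a i)) * (w i * g.eval (a i)) ^ pe
        = -(d i * ((P i)⁻¹ * (f * g ^ pe).eval (a i))) := by
      intro i
      have e1 : (w i * f.eval (a i)) * (w i * g.eval (a i)) ^ pe
          = w i ^ (pe + 1) * (f.eval (a i) * (g.eval (a i)) ^ pe) := by
        rw [mul_pow, pow_succ]
        ring
      rw [e1, hwpow i, hv2 i, eval_mul, eval_pow]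
      ring
    rw [Finset.sum_congr rfl fun i _ => hterm i]
    have hDQ : ∑ i : Fin n, d i * ((P i)⁻¹ * (f * g ^ pe).eval (a i))
        = ∑ i : Fin n, (P i)⁻¹ * (f * g ^ pe).eval (a i)
          + (δ - 1) * ∑ i ∈ T, (P i)⁻¹ * ((f * g ^ pe).eval (a i)) := by
      have e3 : (δ - 1) * ∑ i ∈ T, (P i)⁻¹ * ((f * g ^ pe).eval (a i))
          = ∑ i : Fin n, (if (i : ℕ) < t then
              (δ - 1) * ((P i)⁻¹ * (f * g ^ pe).eval (a i)) else 0) := by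
        rw [Finset.mul_sum, hT, Finset.sum_filter]
      rw [e3, ← Finset.sum_add_distrib]
      refine Finset.sum_congr rfl fun i _ => ?_
      simp only [hd]
      by_cases hit : (i : ℕ) < t
      · rw [if_pos hit, if_pos hit]
        ring
      · rw [if_neg hit, if_neg hit]
        ring
    have hsplit : ∑ i : Fin n, -(d i * ((P i)⁻¹ * (f * g ^ pe).eval (a i)))
        = -((δ - 1) * ∑ i ∈ T, (P i)⁻¹ * ((f * g ^ pe).eval (a i))) := by
      rw [Finset.sum_neg_distrib, hDQ, hsum0, zero_add]
    rw [hsplit]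
    have e4 : ∑ i ∈ T, (P i)⁻¹ * ((f * g ^ pe).eval (a i))
        = ∑ i ∈ T, (P i)⁻¹ * (f.eval (a i) * (g.eval (a i)) ^ pe) := by
      refine Finset.sum_congr rfl fun i _ => ?_
      rw [eval_mul, eval_pow]
    rw [e4]
    ring
  -- the MDS property
  have hMDS : ∀ c ∈ CC, c ≠ 0 → n - k + 2 ≤ hammingNorm c := by
    intro c hc hc0
    obtain ⟨f, hdf, rfl⟩ := (hmemC c).mp hc
    have hf0 : f ≠ 0 := fun h0 => hc0 (by rw [h0, map_zero])
    have hZle : (Finset.univ.filter fun i : Fin n => f.eval (a i) = 0).card ≤ f.natDegree :=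
      card_eval_zero_le a ha f hf0
    set N1 := (Finset.univ.filter fun i : Fin n => ¬ f.eval (a i) = 0).image Fin.castSucc with hN1
    have hN1sub : N1 ⊆ Finset.univ.filter (fun i : Fin (n + 1) => ¬ Φ f i = 0) := by
      intro x hx
      simp only [hN1, Finset.mem_image, Finset.mem_filter, Finset.mem_univ, true_and] at hx ⊢
      obtain ⟨i, hi, rfl⟩ := hx
      rw [hΦapp, Fin.snoc_castSucc]
      intro hcon
      rcases mul_eq_zero.mp hcon with hz | hz
      · exact hw0 i hz
      · exact hi hz
    have hN1card : N1.card = (Finset.univ.filter fun i : Fin n => ¬ f.eval (a i) = 0).card :=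
      Finset.card_image_of_injective _ (Fin.castSucc_injective n)
    have hHam : hammingNorm (Φ f)
        = (Finset.univ.filter fun i : Fin (n + 1) => ¬ Φ f i = 0).card := by
      simp [hammingNorm, ne_eq]
    have hfilt := Finset.card_filter_add_card_filter_not
      (s := (Finset.univ : Finset (Fin n))) (p := fun i : Fin n => f.eval (a i) = 0)
    rw [Finset.card_univ, Fintype.card_fin] at hfilt
    have hsub := Finset.card_le_card hN1sub
    by_cases hck : f.coeff (k - 1) = 0
    · have hnd2 : f.natDegree + 1 ≤ k - 1 := by
        by_contra hcon
        have h1 : f.natDegree = k - 1 := by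
          have := hnd f hdf
          omega
        have h2 := Polynomial.leadingCoeff_ne_zero.mpr hf0
        rw [Polynomial.leadingCoeff, h1] at h2
        exact h2 hck
      rw [hHam]
      omega
    · have hlastmem : Fin.last n ∈ Finset.univ.filter (fun i : Fin (n + 1) => ¬ Φ f i = 0) := by
        simp only [Finset.mem_filter, Finset.mem_univ, true_and]
        rw [hΦapp, Fin.snoc_last]
        exact hck
      have hlastnot : Fin.last n ∉ N1 := by
        simp only [hN1, Finset.mem_image]
        rintro ⟨i, -, hi⟩
        exact absurd hi (Fin.castSucc_lt_last i).ne
      have hins : insert (Fin.last n) N1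
          ⊆ Finset.univ.filter (fun i : Fin (n + 1) => ¬ Φ f i = 0) :=
        Finset.insert_subset hlastmem hN1sub
      have hcard2 := Finset.card_le_card hins
      rw [Finset.card_insert_of_notMem hlastnot] at hcard2
      have hnd1 : f.natDegree ≤ k - 1 := hnd f hdf
      rw [hHam]
      omega
  -- the hull computation
  set Pg : Polynomial F := ∏ i ∈ T, (X - C (a i)) with hPg
  have hPgm : Pg.Monic := monic_prod_of_monic _ _ fun j _ => monic_X_sub_C (a j)
  have hPgnd : Pg.natDegree = t := by
    rw [hPg, natDegree_prod_of_monic _ _ fun j _ => monic_X_sub_C (a j)]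
    simp [hTcard]
  have hPgDdeg : ∀ D : Polynomial F, D.degree < (l : ℕ) →
      (Pg * D).degree < ((k - 1 : ℕ) : ℕ) := by
    intro D hD
    by_cases h0 : D = 0
    · rw [h0, mul_zero, degree_zero]
      exact_mod_cast WithBot.bot_lt_coe _
    · have hDl : D.natDegree + 1 ≤ l := by
        have := (Polynomial.natDegree_lt_iff_degree_lt h0).mpr hD
        omega
      rw [degree_eq_natDegree (mul_ne_zero hPgm.ne_zero h0), natDegree_mul hPgm.ne_zero h0, hPgnd]
      exact_mod_cast (by omega : t + D.natDegree < k - 1)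
  have hPgDk : ∀ D : Polynomial F, D.degree < (l : ℕ) → (Pg * D).degree < (k : ℕ) := by
    intro D hD
    refine lt_of_lt_of_le (hPgDdeg D hD) ?_
    exact_mod_cast (by omega : k - 1 ≤ k)
  set ψl := (Φ.comp (LinearMap.mulLeft F Pg)).comp (Polynomial.degreeLT F l).subtype with hψl
  have hψlapp : ∀ D : Polynomial F, ∀ hD : D ∈ Polynomial.degreeLT F l,
      ψl ⟨D, hD⟩ = Φ (Pg * D) := fun _ _ => rfl
  have hdualmem : ∀ x : Fin (n + 1) → F,
      x ∈ galoisDual pe CC ↔ ∀ y ∈ CC, ∑ i, x i * (y i) ^ pe = 0 := fun x => Iff.rfl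
  have heq : CC ⊓ galoisDual pe CC = LinearMap.range ψl := by
    apply le_antisymm
    · intro x hx
      obtain ⟨hxC, hxD⟩ := Submodule.mem_inf.mp hx
      obtain ⟨f, hdf, rfl⟩ := (hmemC x).mp hxC
      rw [hdualmem] at hxD
      have hcond : ∀ g : Polynomial F, g.degree < (k : ℕ) →
          f.coeff (k - 1) * (g.coeff (k - 1)) ^ pe
            = (δ - 1) * ∑ i ∈ T, (P i)⁻¹ * (f.eval (a i) * (g.eval (a i)) ^ pe) := by
        intro g hdg
        have h1 := hxD (Φ g) ((hmemC _).mpr ⟨g, hdg, rfl⟩)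
        rw [hpair f g hdf hdg] at h1
        exact sub_eq_zero.mp h1
      have hT0 : ∀ i ∈ T, f.eval (a i) = 0 := by
        intro i0 hi0
        have hit0 : (i0 : ℕ) < t := (hmemT i0).mp hi0
        have ht0 : 0 < t := by omega
        have hδ1 : δ - 1 ≠ 0 := sub_ne_zero_of_ne (hγδ ht0)
        set g := ∏ j ∈ T.erase i0, (X - C (a j)) with hgdef
        have hgm : g.Monic := monic_prod_of_monic _ _ fun j _ => monic_X_sub_C (a j)
        have hgnd : g.natDegree = t - 1 := by
          rw [hgdef, natDegree_prod_of_monic _ _ fun j _ => monic_X_sub_C (a j)]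
          simp [Finset.card_erase_of_mem hi0, hTcard]
        have hgdeg : g.degree < (k : ℕ) := by
          rw [degree_eq_natDegree hgm.ne_zero, hgnd]
          exact_mod_cast (by omega : t - 1 < k)
        have hgc : g.coeff (k - 1) = 0 := by
          apply coeff_eq_zero_of_natDegree_lt
          rw [hgnd]
          omega
        have h2 := hcond g hgdeg
        rw [hgc, zero_pow (by omega : pe ≠ 0), mul_zero] at h2
        rw [Finset.sum_eq_single_of_mem i0 hi0] at h2
        · have hge : g.eval (a i0) ≠ 0 := by
            rw [hgdef, eval_prod]
            refine Finset.prod_ne_zero_iff.mpr fun j hj => ?_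
            simp only [eval_sub, eval_X, eval_C]
            exact sub_ne_zero_of_ne fun hc => (Finset.ne_of_mem_erase hj) ((ha hc).symm)
          have h2' := h2.symm
          rcases mul_eq_zero.mp h2' with hz | hz
          · exact absurd hz hδ1
          rcases mul_eq_zero.mp hz with hz' | hz'
          · exact absurd hz' (inv_ne_zero (hPne i0))
          rcases mul_eq_zero.mp hz' with hz'' | hz''
          · exact hz''
          · exact absurd hz'' (pow_ne_zero _ hge)
        · intro j hj hji
          have hgz : g.eval (a j) = 0 := by
            rw [hgdef, eval_prod]
            exact Finset.prod_eq_zero (Finset.mem_erase.mpr ⟨hji, hj⟩) (by simp)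
          rw [hgz, zero_pow (by omega : pe ≠ 0), mul_zero, mul_zero]
      have hfc : f.coeff (k - 1) = 0 := by
        have hdx : (X ^ (k - 1) : Polynomial F).degree < (k : ℕ) := by
          rw [degree_X_pow]
          exact_mod_cast (by omega : k - 1 < k)
        have h3 := hcond (X ^ (k - 1)) hdx
        rw [coeff_X_pow, if_pos rfl, one_pow, mul_one] at h3
        rw [h3]
        rw [Finset.sum_eq_zero fun i hi => by rw [hT0 i hi, zero_mul, mul_zero], mul_zero]
      have hdvdPg : Pg ∣ f := by
        rw [hPg]
        refine Finset.prod_dvd_of_coprime ?_ fun i hi => ?_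
        · intro i _ j _ hij
          exact (Polynomial.pairwise_coprime_X_sub_C ha) hij
        · exact dvd_iff_isRoot.mpr (hT0 i hi)
      obtain ⟨D, hDeq⟩ := hdvdPg
      have hDdeg : D.degree < (l : ℕ) := by
        by_cases h0 : f = 0
        · have hD0 : D = 0 := by
            rw [h0] at hDeq
            rcases mul_eq_zero.mp hDeq.symm with hz | hz
            · exact absurd hz hPgm.ne_zero
            · exact hz
          rw [hD0, degree_zero]
          exact_mod_cast WithBot.bot_lt_coe _
        · have hD0 : D ≠ 0 := by
            rintro rfl
            rw [mul_zero] at hDeq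
            exact h0 hDeq
          have hfnd : f.natDegree + 1 ≤ k - 1 := by
            by_contra hcon
            have h1 : f.natDegree = k - 1 := by
              have := hnd f hdf
              omega
            have h2 := Polynomial.leadingCoeff_ne_zero.mpr h0
            rw [Polynomial.leadingCoeff, h1] at h2
            exact h2 hfc
          have h4 : f.natDegree = t + D.natDegree := by
            rw [hDeq, natDegree_mul hPgm.ne_zero hD0, hPgnd]
          rw [degree_eq_natDegree hD0]
          exact_mod_cast (by omega : D.natDegree < l)
      refine LinearMap.mem_range.mpr ⟨⟨D, Polynomial.mem_degreeLT.mpr hDdeg⟩, ?_⟩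
      rw [hψlapp, ← hDeq]
    · rintro x hx
      obtain ⟨⟨D, hD⟩, rfl⟩ := LinearMap.mem_range.mp hx
      have hDdeg := Polynomial.mem_degreeLT.mp hD
      rw [hψlapp]
      have hdegPD : (Pg * D).degree < (k : ℕ) := hPgDk D hDdeg
      refine Submodule.mem_inf.mpr ⟨(hmemC _).mpr ⟨Pg * D, hdegPD, rfl⟩, ?_⟩
      rw [hdualmem]
      intro y hy
      obtain ⟨g, hdg, rfl⟩ := (hmemC y).mp hy
      rw [hpair (Pg * D) g hdegPD hdg]
      have hc0 : (Pg * D).coeff (k - 1) = 0 :=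
        coeff_eq_zero_of_degree_lt (hPgDdeg D hDdeg)
      have hz : ∀ i ∈ T, (P i)⁻¹ * ((Pg * D).eval (a i) * (g.eval (a i)) ^ pe) = 0 := by
        intro i hi
        have : (Pg * D).eval (a i) = 0 := by
          rw [eval_mul, hPg, eval_prod, Finset.prod_eq_zero hi (by simp), zero_mul]
        rw [this, zero_mul, mul_zero]
      rw [hc0, zero_mul, Finset.sum_eq_zero hz, mul_zero, sub_zero]
  -- conclusion
  refine ⟨CC, ?_, hMDS, ?_⟩
  · have hinj : Function.Injective ⇑(Φ.comp (Polynomial.degreeLT F k).subtype) := by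
      rw [← LinearMap.ker_eq_bot, LinearMap.ker_eq_bot']
      rintro ⟨f, hf⟩ h0
      exact Subtype.ext (hΦzero f (Polynomial.mem_degreeLT.mp hf) h0)
    rw [hCC, LinearMap.finrank_range_of_inj hinj,
      (Polynomial.degreeLTEquiv F k).finrank_eq, Module.finrank_fin_fun]
  · rw [heq]
    have hinj : Function.Injective ⇑ψl := by
      rw [← LinearMap.ker_eq_bot, LinearMap.ker_eq_bot']
      rintro ⟨D, hD⟩ h0
      have hDdeg := Polynomial.mem_degreeLT.mp hD
      rw [hψlapp] at h0
      have h2 : Pg * D = 0 := hΦzero _ (hPgDk D hDdeg) h0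
      refine Subtype.ext ?_
      rcases mul_eq_zero.mp h2 with hz | hz
      · exact absurd hz hPgm.ne_zero
      · exact hz
    rw [LinearMap.finrank_range_of_inj hinj,
      (Polynomial.degreeLTEquiv F l).finrank_eq, Module.finrank_fin_fun]
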